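/- If F ⊆ I is a facial set of P_A, then there exists a probability distribution p in the closure of E_A with support exactly F; in fact, letting g define the face (⟨g,f_i⟩ ≥ c with equality exactly on F), the distributions p_{−s·g} converge as s → ∞ to the uniform distribution on F. -/

import Mathlib

open Filter

/-- The discrete exponential family `E_A` as a set of distributions on `I`. -/
noncomputable def expFam {I J : Type} [Fintype I] [Fintype J] (A : J → I → ℝ) :
    Set (I → ℝ) :=
  {q | ∃ θ : J → ℝ, q = fun i =>
    Real.exp (∑ j, θ j * A j i - Real.log (∑ i', Real.exp (∑ j, θ j * A j i')))}

lemma aux_tendsto_term {d : ℝ} (hd : 0 ≤ d) :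
    Tendsto (fun s : ℝ => Real.exp (-s * d)) atTop
      (nhds (if d = 0 then 1 else 0)) := by
  rcases eq_or_lt_of_le hd with h | h
  · simp [← h]
  · rw [if_neg h.ne']
    have h1 : Tendsto (fun s : ℝ => -s * d) atTop atBot := by
      have h2 : Tendsto (fun s : ℝ => s * d) atTop atTop :=
        tendsto_id.atTop_mul_const h
      simpa [Function.comp_def, neg_mul] using tendsto_neg_atTop_atBot.comp h2
    exact Real.tendsto_exp_atBot.comp h1

/-- If `F ⊆ I` is a facial set of `P_A`, defined by `g, c` with
`⟨g, f_i⟩ ≥ c` for all `i` and equality exactly on `F`, then the distributions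
`p_{−s·g}` converge, as `s → ∞`, to the uniform distribution on `F`; in particular
there is a distribution in the closure of `E_A` with support exactly `F`. -/
theorem tendsto_uniform_on_facial {I J : Type} [Fintype I] [Fintype J] [DecidableEq I]
    [Nonempty I] (A : J → I → ℝ) (F : Finset I) (g : J → ℝ) (c : ℝ)
    (hvalid : ∀ i, c ≤ ∑ j, g j * A j i)
    (hface : ∀ i, (∑ j, g j * A j i = c) ↔ i ∈ F)
    (hne : F.Nonempty) :
    Tendsto (fun s : ℝ => fun i : I =>
        Real.exp (∑ j, (-s * g j) * A j i -
          Real.log (∑ i', Real.exp (∑ j, (-s * g j) * A j i'))))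
      atTop (nhds (fun i : I => if i ∈ F then (F.card : ℝ)⁻¹ else 0)) ∧
    (fun i : I => if i ∈ F then (F.card : ℝ)⁻¹ else 0) ∈ closure (expFam A) ∧
    (∀ i, (if i ∈ F then (F.card : ℝ)⁻¹ else 0) ≠ 0 ↔ i ∈ F) := by
  set T : I → ℝ := fun i => ∑ j, g j * A j i with hT
  have hsum : ∀ (s : ℝ) (i : I), ∑ j, (-s * g j) * A j i = -s * T i := by
    intro s i
    rw [hT, Finset.mul_sum]
    congr 1; ext j; ring
  have hSpos : ∀ s : ℝ, 0 < ∑ i', Real.exp (-s * T i') := by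
    intro s
    exact Finset.sum_pos (fun i _ => Real.exp_pos _) Finset.univ_nonempty
  -- rewrite p_s i as exp(-s*(T i - c)) / ∑ exp(-s*(T i' - c))
  have key : ∀ (s : ℝ) (i : I),
      Real.exp (∑ j, (-s * g j) * A j i -
          Real.log (∑ i', Real.exp (∑ j, (-s * g j) * A j i'))) =
      Real.exp (-s * (T i - c)) / ∑ i', Real.exp (-s * (T i' - c)) := by
    intro s i
    simp only [hsum]
    rw [Real.exp_sub, Real.exp_log (hSpos s)]
    have h1 : ∀ i', Real.exp (-s * T i') = Real.exp (-s * (T i' - c)) * Real.exp (-s * c) := by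
      intro i'; rw [← Real.exp_add]; ring_nf
    rw [h1 i, show (∑ i', Real.exp (-s * T i')) = (∑ i', Real.exp (-s * (T i' - c))) * Real.exp (-s * c) from by
        rw [Finset.sum_mul]; exact Finset.sum_congr rfl fun i' _ => h1 i',
      mul_div_mul_right _ _ (Real.exp_ne_zero _)]
  have hcardpos : (0 : ℝ) < F.card := by exact_mod_cast Finset.card_pos.mpr hne
  -- tendsto of numerator terms
  have hterm : ∀ i : I, Tendsto (fun s : ℝ => Real.exp (-s * (T i - c))) atTop
      (nhds (if i ∈ F then 1 else 0)) := by
    intro i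
    have hd : 0 ≤ T i - c := sub_nonneg.mpr (hvalid i)
    have := aux_tendsto_term hd
    have heq : (T i - c = 0) ↔ i ∈ F := by
      rw [sub_eq_zero]; exact hface i
    by_cases h : i ∈ F
    · rw [if_pos h]; rwa [if_pos (heq.mpr h)] at this
    · rw [if_neg h]
      rwa [if_neg (fun hh => h (heq.mp hh))] at this
  have hdenom : Tendsto (fun s : ℝ => ∑ i', Real.exp (-s * (T i' - c))) atTop
      (nhds (F.card : ℝ)) := by
    have := tendsto_finset_sum Finset.univ (fun i _ => hterm i)
    have hval : (∑ i' : I, if i' ∈ F then (1 : ℝ) else 0) = F.card := by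
      simp [Finset.sum_ite_mem]
    rwa [hval] at this
  have htend : Tendsto (fun s : ℝ => fun i : I =>
        Real.exp (∑ j, (-s * g j) * A j i -
          Real.log (∑ i', Real.exp (∑ j, (-s * g j) * A j i'))))
      atTop (nhds (fun i : I => if i ∈ F then (F.card : ℝ)⁻¹ else 0)) := by
    rw [tendsto_pi_nhds]
    intro i
    simp only [key]
    have := (hterm i).div hdenom hcardpos.ne'
    by_cases h : i ∈ F
    · simpa [h, one_div, Pi.div_def] using this
    · simpa [h, Pi.div_def] using this
  refine ⟨htend, ?_, ?_⟩
  · exact mem_closure_of_tendsto htend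
      (Eventually.of_forall fun s => ⟨fun j => -s * g j, rfl⟩)
  · intro i
    by_cases h : i ∈ F
    · simp [h, hcardpos.ne']
    · simp [h]
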